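/- Fix an integer k ≥ 2, let f_ℓ(n) be defined by the recurrence f_ℓ(0) = 1, f_ℓ(n) = 0 for n < 0, f_ℓ(n) = Σ_{i=1}^{ℓ+1} ((ℓ+2−i)k − 1) f_i(n−i) for n ≥ 1, and let F_ℓ = Σ_{n=0}^∞ f_ℓ(n) z^n ∈ ℚ[[z]]. Then for all ℓ ≥ 1: F_{ℓ+2} − 2 F_{ℓ+1} + F_ℓ = z^{ℓ+2} F_{ℓ+2} + (k − 1) z^{ℓ+3} F_{ℓ+3}. -/

import Mathlib

/-- `f` satisfies the defining recurrence of the numbers `f_ℓ(n)` of row-convex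
`k`-omino towers over a platform: `f_ℓ(0) = 1`, `f_ℓ(n) = 0` for `n < 0`, and
`f_ℓ(n) = Σ_{i=1}^{ℓ+1} ((ℓ+2−i)k − 1) · f_i(n−i)` for `n ≥ 1` (all for `ℓ ≥ 1`). -/
def SatisfiesRec (k : ℕ) (f : ℕ → ℤ → ℚ) : Prop :=
  (∀ ℓ : ℕ, 1 ≤ ℓ → f ℓ 0 = 1) ∧
  (∀ ℓ : ℕ, 1 ≤ ℓ → ∀ n : ℤ, n < 0 → f ℓ n = 0) ∧
  (∀ ℓ : ℕ, 1 ≤ ℓ → ∀ n : ℤ, 1 ≤ n →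
    f ℓ n = ∑ i ∈ Finset.Icc 1 (ℓ + 1), (((ℓ + 2 - i) * k - 1 : ℕ) : ℚ) * f i (n - i))

/-- `F_ℓ = Σ_{n≥0} f_ℓ(n) zⁿ ∈ ℚ[[z]]`. -/
noncomputable def Fgen (f : ℕ → ℤ → ℚ) (ℓ : ℕ) : PowerSeries ℚ :=
  PowerSeries.mk fun n => f ℓ (n : ℤ)

/-- For all `ℓ ≥ 1`:
`F_{ℓ+2} − 2 F_{ℓ+1} + F_ℓ = z^{ℓ+2} F_{ℓ+2} + (k − 1) z^{ℓ+3} F_{ℓ+3}`. -/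
theorem F_recurrence (k : ℕ) (hk : 2 ≤ k) (f : ℕ → ℤ → ℚ)
    (hf : SatisfiesRec k f) (ℓ : ℕ) (hℓ : 1 ≤ ℓ) :
    Fgen f (ℓ + 2) - 2 * Fgen f (ℓ + 1) + Fgen f ℓ =
      (PowerSeries.X : PowerSeries ℚ) ^ (ℓ + 2) * Fgen f (ℓ + 2) +
        PowerSeries.C (R := ℚ) ((k : ℚ) - 1) * (PowerSeries.X : PowerSeries ℚ) ^ (ℓ + 3) *
          Fgen f (ℓ + 3) := by
  obtain ⟨h0, hneg, hrec⟩ := hf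
  -- key pointwise identity
  have key : ∀ n : ℤ, 1 ≤ n →
      f (ℓ+2) n - 2 * f (ℓ+1) n + f ℓ n =
        f (ℓ+2) (n - ((ℓ+2 : ℕ) : ℤ)) + ((k:ℚ) - 1) * f (ℓ+3) (n - ((ℓ+3 : ℕ) : ℤ)) := by
    intro n hn
    have split3 : ∀ g : ℕ → ℚ, ∑ i ∈ Finset.Icc 1 (ℓ+2+1), g i =
        (∑ i ∈ Finset.Icc 1 (ℓ+1), g i) + g (ℓ+2) + g (ℓ+3) := by
      intro g
      have h1 : Finset.Icc 1 (ℓ+2+1) = insert (ℓ+3) (insert (ℓ+2) (Finset.Icc 1 (ℓ+1))) := by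
        ext x; simp [Finset.mem_Icc]; omega
      rw [h1, Finset.sum_insert (by simp only [Finset.mem_insert, Finset.mem_Icc]; omega),
        Finset.sum_insert (by simp only [Finset.mem_insert, Finset.mem_Icc]; omega)]
      ring
    have split2 : ∀ g : ℕ → ℚ, ∑ i ∈ Finset.Icc 1 (ℓ+1+1), g i =
        (∑ i ∈ Finset.Icc 1 (ℓ+1), g i) + g (ℓ+2) := by
      intro g
      have h1 : Finset.Icc 1 (ℓ+1+1) = insert (ℓ+2) (Finset.Icc 1 (ℓ+1)) := by
        ext x; simp [Finset.mem_Icc]; omega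
      rw [h1, Finset.sum_insert (by simp only [Finset.mem_insert, Finset.mem_Icc]; omega)]
      ring
    rw [hrec (ℓ+2) (by omega) n hn, hrec (ℓ+1) (by omega) n hn, hrec ℓ hℓ n hn,
      split3, split2]
    have e1 : ℓ+2+2-(ℓ+2) = 2 := by omega
    have e2 : ℓ+2+2-(ℓ+3) = 1 := by omega
    have e3 : ℓ+1+2-(ℓ+2) = 1 := by omega
    rw [e1, e2, e3]
    have c1 : ((2*k-1 : ℕ) : ℚ) = 2*(k:ℚ)-1 := by
      rw [Nat.cast_sub (by omega)]; push_cast; ring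
    have c2 : ((1*k-1 : ℕ) : ℚ) = (k:ℚ)-1 := by
      rw [Nat.cast_sub (by omega)]; push_cast; ring
    rw [c1, c2]
    have hzero : (∑ i ∈ Finset.Icc 1 (ℓ+1), (((ℓ+2+2-i)*k-1 : ℕ) : ℚ) * f i (n-i))
        - 2 * (∑ i ∈ Finset.Icc 1 (ℓ+1), (((ℓ+1+2-i)*k-1 : ℕ) : ℚ) * f i (n-i))
        + (∑ i ∈ Finset.Icc 1 (ℓ+1), (((ℓ+2-i)*k-1 : ℕ) : ℚ) * f i (n-i)) = 0 := by
      rw [Finset.mul_sum, ← Finset.sum_sub_distrib, ← Finset.sum_add_distrib]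
      apply Finset.sum_eq_zero
      intro i hi
      simp only [Finset.mem_Icc] at hi
      obtain ⟨hi1, hi2⟩ := hi
      have ca : (((ℓ+2+2-i)*k-1 : ℕ) : ℚ) = ((ℓ:ℚ)+4-i)*k-1 := by
        rw [Nat.cast_sub (by simpa using Nat.mul_le_mul (show 1 ≤ _ by omega) (show 1 ≤ k by omega)), Nat.cast_mul, Nat.cast_sub (by omega)]; push_cast; ring
      have cb : (((ℓ+1+2-i)*k-1 : ℕ) : ℚ) = ((ℓ:ℚ)+3-i)*k-1 := by
        rw [Nat.cast_sub (by simpa using Nat.mul_le_mul (show 1 ≤ _ by omega) (show 1 ≤ k by omega)), Nat.cast_mul, Nat.cast_sub (by omega)]; push_cast; ring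
      have cc : (((ℓ+2-i)*k-1 : ℕ) : ℚ) = ((ℓ:ℚ)+2-i)*k-1 := by
        rw [Nat.cast_sub (by simpa using Nat.mul_le_mul (show 1 ≤ _ by omega) (show 1 ≤ k by omega)), Nat.cast_mul, Nat.cast_sub (by omega)]; push_cast; ring
      rw [ca, cb, cc]; ring
    push_cast
    push_cast at hzero
    linear_combination hzero
  -- now the power-series identity, coefficientwise
  ext n
  set a : ℚ := (k : ℚ) - 1 with ha
  have hX2 : (PowerSeries.X : PowerSeries ℚ) ^ (ℓ + 2) * Fgen f (ℓ + 2)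
      = Fgen f (ℓ + 2) * PowerSeries.X ^ (ℓ + 2) := by ring
  have hX3 : PowerSeries.C (R := ℚ) a * (PowerSeries.X : PowerSeries ℚ) ^ (ℓ + 3) *
      Fgen f (ℓ + 3) = PowerSeries.C (R := ℚ) a * (Fgen f (ℓ + 3) * PowerSeries.X ^ (ℓ + 3)) := by
    ring
  have h2 : (2 : PowerSeries ℚ) * Fgen f (ℓ+1) = Fgen f (ℓ+1) + Fgen f (ℓ+1) := by ring
  rw [hX2, hX3, h2]
  simp only [map_sub, map_add, PowerSeries.coeff_C_mul, PowerSeries.coeff_mul_X_pow',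
    Fgen, PowerSeries.coeff_mk]
  rcases Nat.eq_zero_or_pos n with hn0 | hn1
  · subst hn0
    rw [if_neg (by omega), if_neg (by omega)]
    rw [show ((0:ℕ):ℤ) = (0:ℤ) from rfl, h0 (ℓ+2) (by omega), h0 (ℓ+1) (by omega), h0 ℓ hℓ]
    ring
  · have hkey := key (n : ℤ) (by exact_mod_cast hn1)
    rw [show f (ℓ+2) (n:ℤ) - (f (ℓ+1) (n:ℤ) + f (ℓ+1) (n:ℤ)) + f ℓ (n:ℤ)
        = f (ℓ+2) (n:ℤ) - 2 * f (ℓ+1) (n:ℤ) + f ℓ (n:ℤ) from by ring, hkey]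
    by_cases hc2 : ℓ + 2 ≤ n
    · rw [if_pos hc2]
      have e2 : ((n - (ℓ+2) : ℕ) : ℤ) = (n:ℤ) - ((ℓ+2:ℕ):ℤ) := by omega
      rw [e2]
      by_cases hc3 : ℓ + 3 ≤ n
      · rw [if_pos hc3]
        have e3 : ((n - (ℓ+3) : ℕ) : ℤ) = (n:ℤ) - ((ℓ+3:ℕ):ℤ) := by omega
        rw [e3]
      · rw [if_neg hc3]
        have hz : f (ℓ+3) ((n:ℤ) - ((ℓ+3:ℕ):ℤ)) = 0 :=
          hneg (ℓ+3) (by omega) _ (by omega)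
        rw [hz]
    · rw [if_neg hc2, if_neg (by omega)]
      have hz2 : f (ℓ+2) ((n:ℤ) - ((ℓ+2:ℕ):ℤ)) = 0 :=
        hneg (ℓ+2) (by omega) _ (by omega)
      have hz3 : f (ℓ+3) ((n:ℤ) - ((ℓ+3:ℕ):ℤ)) = 0 :=
        hneg (ℓ+3) (by omega) _ (by omega)
      rw [hz2, hz3]
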